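/- Let W : ℕ → A be a recurrent infinite word over a finite alphabet A such that for some natural number N and constant K one has T_W(n) = n + K for all n ≥ N. Then W is uniformly recurrent. -/

import Mathlib

/-- The factor of the infinite word `W` of length `n` occurring at position `i`. -/
def factorAt {A : Type*} (W : ℕ → A) (i n : ℕ) : List A :=
  (List.range n).map (fun j => W (i + j))

/-- `u` occurs in `W` at position `i`. -/
def occursAt {A : Type*} (W : ℕ → A) (u : List A) (i : ℕ) : Prop :=
  u = factorAt W i u.length

/-- `u` is a factor of the infinite word `W`. -/
def IsFactor {A : Type*} (W : ℕ → A) (u : List A) : Prop :=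
  ∃ i : ℕ, occursAt W u i

/-- `W` is recurrent: every factor occurs infinitely often. -/
def Recurrent {A : Type*} (W : ℕ → A) : Prop :=
  ∀ u : List A, IsFactor W u → {i : ℕ | occursAt W u i}.Infinite

/-- The complexity function: the number of distinct factors of `W` of length `n`. -/
noncomputable def complexity {A : Type*} (W : ℕ → A) (n : ℕ) : ℕ :=
  Set.ncard {u : List A | u.length = n ∧ IsFactor W u}

/-- `W` is uniformly recurrent: every factor occurs in every sufficiently long
factor of `W`. -/
def UniformlyRecurrent {A : Type*} (W : ℕ → A) : Prop :=
  ∀ v : List A, IsFactor W v → ∃ N : ℕ,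
    ∀ u : List A, IsFactor W u → u.length = N → v <:+: u

section Aux

variable {A : Type*} (W : ℕ → A)

@[simp] lemma length_factorAt (i n : ℕ) : (factorAt W i n).length = n := by
  simp [factorAt]

lemma factorAt_zero (i : ℕ) : factorAt W i 0 = [] := by simp [factorAt]

lemma factorAt_succ (i n : ℕ) :
    factorAt W i (n + 1) = factorAt W i n ++ [W (i + n)] := by
  simp [factorAt, List.range_succ]

lemma factorAt_add (i a b : ℕ) :
    factorAt W i (a + b) = factorAt W i a ++ factorAt W (i + a) b := by
  induction b with
  | zero => simp [factorAt_zero]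
  | succ b ih =>
      rw [show a + (b + 1) = (a + b) + 1 from rfl, factorAt_succ, ih, factorAt_succ,
        List.append_assoc]
      ring_nf

lemma take_factorAt (i : ℕ) {m n : ℕ} (hmn : m ≤ n) :
    (factorAt W i n).take m = factorAt W i m := by
  have h := factorAt_add W i m (n - m)
  rw [Nat.add_sub_cancel' hmn] at h
  rw [h, List.take_left' (length_factorAt W i m)]

lemma drop_factorAt (i : ℕ) {m n : ℕ} (hmn : m ≤ n) :
    (factorAt W i n).drop m = factorAt W (i + m) (n - m) := by
  have h := factorAt_add W i m (n - m)
  rw [Nat.add_sub_cancel' hmn] at h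
  rw [h, List.drop_left' (length_factorAt W i m)]

lemma occursAt_factorAt (i n : ℕ) : occursAt W (factorAt W i n) i := by
  unfold occursAt
  rw [length_factorAt]

lemma isFactor_factorAt (i n : ℕ) : IsFactor W (factorAt W i n) :=
  ⟨i, occursAt_factorAt W i n⟩

lemma isFactor_of_infix {u u' : List A} (hinf : u <:+: u') (hf : IsFactor W u') :
    IsFactor W u := by
  obtain ⟨s, t, rfl⟩ := hinf
  obtain ⟨i, hi⟩ := hf
  rw [occursAt] at hi
  have hlen : u.length ≤ (s ++ u ++ t).length - s.length := by simp
  have h1 : u = ((s ++ u ++ t).drop s.length).take u.length := by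
    rw [List.append_assoc, List.drop_left, List.take_left]
  rw [hi, drop_factorAt W i (by simp), take_factorAt W _ hlen] at h1
  exact ⟨i + s.length, h1⟩

lemma finite_factors [Fintype A] (n : ℕ) :
    {u : List A | u.length = n ∧ IsFactor W u}.Finite :=
  (List.finite_length_eq A n).subset (fun _ hu => hu.1)

/-- `u` is right special in `W`. -/
def RightSp (u : List A) : Prop :=
  ∃ a b : A, a ≠ b ∧ IsFactor W (u ++ [a]) ∧ IsFactor W (u ++ [b])

lemma eq_of_not_rs {u : List A} {a b : A} (h : ¬ RightSp W u)
    (ha : IsFactor W (u ++ [a])) (hb : IsFactor W (u ++ [b])) : a = b := by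
  by_contra hne
  exact h ⟨a, b, hne, ha, hb⟩

lemma rs_of_suffix {u s : List A} (h : RightSp W u) (hs : s <:+ u) : RightSp W s := by
  obtain ⟨a, b, hab, ha, hb⟩ := h
  obtain ⟨c, rfl⟩ := hs
  refine ⟨a, b, hab, ?_, ?_⟩
  · exact isFactor_of_infix W (List.IsSuffix.isInfix ⟨c, by rw [List.append_assoc]⟩) ha
  · exact isFactor_of_infix W (List.IsSuffix.isInfix ⟨c, by rw [List.append_assoc]⟩) hb

lemma rs_unique [Fintype A] {N K : ℕ}
    (h : ∀ n : ℕ, N ≤ n → complexity W n = n + K)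
    {n : ℕ} (hn : N ≤ n) {z z' : List A}
    (hz1 : z.length = n) (hz3 : RightSp W z)
    (hz1' : z'.length = n) (hz3' : RightSp W z') : z = z' := by
  classical
  by_contra hne
  set S : Set (List A) := {u : List A | u.length = n ∧ IsFactor W u} with hS
  set S' : Set (List A) := {u : List A | u.length = n + 1 ∧ IsFactor W u} with hS'
  have hext : ∀ u ∈ S, ∃ e, (e ∈ S' ∧ e.take n = u) := by
    intro u hu
    obtain ⟨i, hi⟩ := hu.2
    have hmem : factorAt W i (n + 1) ∈ S' :=
      ⟨length_factorAt W i (n + 1), isFactor_factorAt W i (n + 1)⟩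
    refine ⟨factorAt W i (n + 1), hmem, ?_⟩
    rw [take_factorAt W i (Nat.le_succ n)]
    rw [occursAt, hu.1] at hi
    exact hi.symm
  choose! f hf using hext
  have hinj : Set.InjOn f S := by
    intro u hu u' hu' he
    rw [← (hf u hu).2, ← (hf u' hu').2, he]
  -- construct the two extra extension words
  have hmk : ∀ y : List A, y.length = n → RightSp W y →
      ∃ e, e ∈ S' ∧ e.take n = y ∧ e ≠ f y := by
    intro y hy1 hy3
    obtain ⟨a, b, hab, ha, hb⟩ := hy3
    have htka : (y ++ [a]).take n = y := by
      rw [← hy1]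
      exact List.take_left
    have htkb : (y ++ [b]).take n = y := by
      rw [← hy1]
      exact List.take_left
    have hlb : (y ++ [b]).length = n + 1 := by simp [hy1]
    have hla : (y ++ [a]).length = n + 1 := by simp [hy1]
    have hmemb : y ++ [b] ∈ S' := ⟨hlb, hb⟩
    have hmema : y ++ [a] ∈ S' := ⟨hla, ha⟩
    by_cases hc : y ++ [a] = f y
    · refine ⟨y ++ [b], hmemb, htkb, ?_⟩
      rw [← hc]
      intro hcon
      have hba : b = a := by simpa using hcon
      exact hab hba.symm
    · exact ⟨y ++ [a], hmema, htka, hc⟩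
  obtain ⟨e₁, he₁S, he₁tk, he₁ne⟩ := hmk z hz1 hz3
  obtain ⟨e₂, he₂S, he₂tk, he₂ne⟩ := hmk z' hz1' hz3'
  have hne1 : e₁ ∉ f '' S := by
    rintro ⟨u, huS, hfu⟩
    have hu : u = z := by rw [← (hf u huS).2, hfu, he₁tk]
    exact he₁ne (by rw [← hfu, hu])
  have hne2 : e₂ ∉ f '' S := by
    rintro ⟨u, huS, hfu⟩
    have hu : u = z' := by rw [← (hf u huS).2, hfu, he₂tk]
    exact he₂ne (by rw [← hfu, hu])
  have hnee : e₁ ≠ e₂ := by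
    intro hcon
    exact hne (by rw [← he₁tk, ← he₂tk, hcon])
  have hSfin : S.Finite := finite_factors W n
  have hS'fin : S'.Finite := finite_factors W (n + 1)
  have himfin : (f '' S).Finite := hSfin.image f
  have hsub : insert e₁ (insert e₂ (f '' S)) ⊆ S' := by
    intro x hx
    rcases hx with rfl | hx
    · exact he₁S
    rcases hx with rfl | ⟨u, huS, rfl⟩
    · exact he₂S
    · exact (hf u huS).1
  have hcard : (insert e₁ (insert e₂ (f '' S))).ncard = (f '' S).ncard + 2 := by
    rw [Set.ncard_insert_of_notMem (by simp [hnee, hne1]) (himfin.insert e₂),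
      Set.ncard_insert_of_notMem hne2 himfin]
  have himcard : (f '' S).ncard = S.ncard := Set.ncard_image_of_injOn hinj
  have hle : (insert e₁ (insert e₂ (f '' S))).ncard ≤ S'.ncard :=
    Set.ncard_le_ncard hsub hS'fin
  have hc1 : S.ncard = n + K := h n hn
  have hc2 : S'.ncard = n + 1 + K := h (n + 1) (le_trans hn (Nat.le_succ n))
  omega

lemma det {i₁ i₂ t₀ : ℕ} (h0 : factorAt W i₁ t₀ = factorAt W i₂ t₀)
    (hrs : ∀ t, t₀ ≤ t → ¬ RightSp W (factorAt W i₁ t)) :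
    ∀ t, factorAt W i₁ t = factorAt W i₂ t := by
  intro t
  induction t with
  | zero => rw [factorAt_zero, factorAt_zero]
  | succ s ih =>
      by_cases hs : s + 1 ≤ t₀
      · have := congrArg (List.take (s + 1)) h0
        rwa [take_factorAt W i₁ hs, take_factorAt W i₂ hs] at this
      · have hs' : t₀ ≤ s := by omega
        have hkey : W (i₁ + s) = W (i₂ + s) := by
          apply eq_of_not_rs W (hrs s hs')
          · rw [← factorAt_succ]
            exact isFactor_factorAt W i₁ (s + 1)
          · rw [ih, ← factorAt_succ]
            exact isFactor_factorAt W i₂ (s + 1)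
        rw [factorAt_succ, factorAt_succ, ih, hkey]

lemma per {i₀ p : ℕ} (hp : 0 < p) (hper : ∀ t, i₀ ≤ t → W (t + p) = W t) (n : ℕ) :
    complexity W n ≤ i₀ + p := by
  have hshift : ∀ j, i₀ + p ≤ j → factorAt W j n = factorAt W (j - p) n := by
    intro j hj
    apply List.ext_getElem (by simp)
    intro t h1 h2
    simp only [factorAt, List.getElem_map, List.getElem_range]
    calc W (j + t) = W ((j - p + t) + p) := by
            rw [show j - p + t + p = j + t from by omega]
      _ = W (j - p + t) := hper (j - p + t) (by omega)
  have hred : ∀ j, ∃ j', j' < i₀ + p ∧ factorAt W j' n = factorAt W j n := by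
    intro j
    induction j using Nat.strong_induction_on with
    | _ j ih =>
      by_cases hj : j < i₀ + p
      · exact ⟨j, hj, rfl⟩
      · push_neg at hj
        obtain ⟨j', hj', he⟩ := ih (j - p) (by omega)
        exact ⟨j', hj', he.trans (hshift j hj).symm⟩
  have hsubs : {u : List A | u.length = n ∧ IsFactor W u} ⊆
      (fun j => factorAt W j n) '' (Set.Iio (i₀ + p)) := by
    rintro u ⟨hlen, i, hi⟩
    obtain ⟨j', hj', he⟩ := hred i
    refine ⟨j', hj', ?_⟩
    rw [occursAt, hlen] at hi
    show factorAt W j' n = u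
    rw [he, ← hi]
  calc complexity W n ≤ ((fun j => factorAt W j n) '' (Set.Iio (i₀ + p))).ncard :=
        Set.ncard_le_ncard hsubs ((Set.finite_Iio _).image _)
    _ ≤ (Set.Iio (i₀ + p)).ncard := Set.ncard_image_le (Set.finite_Iio _)
    _ = i₀ + p := by
        rw [show (Set.Iio (i₀ + p)) = ↑(Finset.Iio (i₀ + p)) from by simp,
          Set.ncard_coe_finset, Nat.card_Iio]

end Aux

/-- A recurrent word with eventual complexity `n + K` is uniformly recurrent. -/
theorem stmt19 {A : Type*} [Fintype A] (W : ℕ → A) (hrec : Recurrent W)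
    (N K : ℕ) (h : ∀ n : ℕ, N ≤ n → complexity W n = n + K) :
    UniformlyRecurrent W := by
  classical
  intro v hv
  by_contra hnot
  push_neg at hnot
  -- no eventual periodicity
  have hNoPer : ∀ i₀ p : ℕ, 0 < p → (∀ t, i₀ ≤ t → W (t + p) = W t) → False := by
    intro i₀ p hp hper
    have h1 := per W hp hper (max N (i₀ + p + 1))
    have h2 := h (max N (i₀ + p + 1)) (le_max_left _ _)
    have h3 : i₀ + p + 1 ≤ max N (i₀ + p + 1) := le_max_right _ _
    omega
  have htwo : ∀ u : List A, IsFactor W u →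
      ∃ i₁ i₂, i₁ < i₂ ∧ occursAt W u i₁ ∧ occursAt W u i₂ := by
    intro u hu
    obtain ⟨i₁, hi₁⟩ := (hrec u hu).nonempty
    obtain ⟨i₂, hi₂, hlt⟩ := (hrec u hu).exists_gt i₁
    exact ⟨i₁, i₂, hlt, hi₁, hi₂⟩
  have hperiod_of_eq : ∀ i₁ i₂ M : ℕ, i₁ < i₂ →
      (∀ t, M ≤ t → factorAt W i₁ t = factorAt W i₂ t) → False := by
    intro i₁ i₂ M hlt hall
    have hlet : ∀ t, M ≤ t → W (i₁ + t) = W (i₂ + t) := by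
      intro t ht
      have h2 := hall (t + 1) (le_trans ht (Nat.le_succ t))
      rw [factorAt_succ, factorAt_succ, hall t ht] at h2
      simpa using h2
    refine hNoPer (i₁ + M) (i₂ - i₁) (by omega) ?_
    intro t ht
    have := hlet (t - i₁) (by omega)
    rw [show i₁ + (t - i₁) = t from by omega,
      show i₂ + (t - i₁) = t + (i₂ - i₁) from by omega] at this
    exact this.symm
  have hcontra1 : ∀ u : List A, IsFactor W u →
      (∀ t, u.length ≤ t → ∀ i, occursAt W u i → ¬ RightSp W (factorAt W i t)) →
      False := by
    intro u hu hnrs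
    obtain ⟨i₁, i₂, hlt, h1, h2⟩ := htwo u hu
    have h0 : factorAt W i₁ u.length = factorAt W i₂ u.length := by
      rw [occursAt] at h1 h2
      rw [← h1, ← h2]
    have hall := det W h0 (fun t ht => hnrs t ht i₁ h1)
    exact hperiod_of_eq i₁ i₂ 0 hlt (fun t _ => hall t)
  by_cases hI : ∃ n₁ : ℕ, ∀ u : List A, IsFactor W u → v <:+: u → n₁ ≤ u.length →
      ¬ RightSp W u
  · -- Case I: long factors containing v are never right special
    obtain ⟨n₁, hn₁⟩ := hI
    obtain ⟨i_v, hiv⟩ := hv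
    rw [occursAt] at hiv
    have hu₀f : IsFactor W (factorAt W i_v (n₁ + v.length)) :=
      isFactor_factorAt W i_v (n₁ + v.length)
    have hvu₀ : v <:+: factorAt W i_v (n₁ + v.length) := by
      have h1 : (factorAt W i_v (n₁ + v.length)).take v.length
          = factorAt W i_v v.length := take_factorAt W i_v (by omega)
      have h2 := List.take_prefix v.length (factorAt W i_v (n₁ + v.length))
      rw [h1, ← hiv] at h2
      exact h2.isInfix
    refine hcontra1 _ hu₀f ?_
    intro t ht i hi
    rw [length_factorAt] at ht
    rw [occursAt, length_factorAt] at hi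
    refine hn₁ _ (isFactor_factorAt W i t) ?_ (by rw [length_factorAt]; omega)
    have h1 : (factorAt W i t).take (n₁ + v.length) = factorAt W i (n₁ + v.length) :=
      take_factorAt W i ht
    have h2 := List.take_prefix (n₁ + v.length) (factorAt W i t)
    rw [h1, ← hi] at h2
    exact hvu₀.trans h2.isInfix
  · -- Case II: there exist arbitrarily long right special factors containing v
    push_neg at hI
    obtain ⟨z, hzf, hzv, hzN, hzRS⟩ := hI N
    have hCLM : ∀ u : List A, IsFactor W u → z.length ≤ u.length →
        ¬ v <:+: u → ¬ RightSp W u := by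
      intro u huf hlen hav hRS
      have hssuf : u.drop (u.length - z.length) <:+ u := List.drop_suffix _ _
      have hslen : (u.drop (u.length - z.length)).length = z.length := by
        simp; omega
      have hsRS : RightSp W (u.drop (u.length - z.length)) := rs_of_suffix W hRS hssuf
      have hsz : u.drop (u.length - z.length) = z :=
        rs_unique W h hzN hslen hsRS rfl hzRS
      exact hav ((hsz ▸ hzv).trans hssuf.isInfix)
    have hav : ∀ L : ℕ, ∃ j, ¬ v <:+: factorAt W j L := by
      intro L
      obtain ⟨u, huf, hulen, huav⟩ := hnot L
      obtain ⟨j, hj⟩ := huf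
      rw [occursAt, hulen] at hj
      exact ⟨j, by rw [← hj]; exact huav⟩
    choose g hg using hav
    set M := z.length with hMdef
    have hfib : ∃ w₀ : List A, {L : ℕ | M ≤ L ∧ factorAt W (g L) M = w₀}.Infinite := by
      by_contra hcon
      push_neg at hcon
      have hsub : Set.Ici M ⊆
          ⋃ w₀ ∈ {u : List A | u.length = M ∧ IsFactor W u},
            {L : ℕ | M ≤ L ∧ factorAt W (g L) M = w₀} := by
        intro L hL
        exact Set.mem_biUnion (x := factorAt W (g L) M)
          ⟨length_factorAt W (g L) M, isFactor_factorAt W (g L) M⟩ ⟨hL, rfl⟩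
      exact Set.Ici_infinite M
        (((finite_factors W M).biUnion (fun w _ => hcon w)).subset hsub)
    obtain ⟨w₀, hw₀⟩ := hfib
    obtain ⟨L₀, hL₀⟩ := hw₀.nonempty
    have hw₀f : IsFactor W w₀ := by
      rw [← hL₀.2]; exact isFactor_factorAt W (g L₀) M
    have hw₀len : w₀.length = M := by rw [← hL₀.2, length_factorAt]
    obtain ⟨i₁, i₂, hlt, ho₁, ho₂⟩ := htwo w₀ hw₀f
    have hchain : ∀ i : ℕ, occursAt W w₀ i → ∀ t, M ≤ t → ∀ L, M ≤ L →
        factorAt W (g L) M = w₀ → t ≤ L → factorAt W i t = factorAt W (g L) t := by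
      intro i hi t htM
      induction t, htM using Nat.le_induction with
      | base =>
          intro L hL hLw hML
          rw [occursAt, hw₀len] at hi
          rw [← hi, hLw]
      | succ t ht ih =>
          intro L hL hLw htL
          have hEq := ih L hL hLw (by omega)
          have havt : ¬ v <:+: factorAt W (g L) t := by
            intro hin
            apply hg L
            have h1 : (factorAt W (g L) L).take t = factorAt W (g L) t :=
              take_factorAt W (g L) (by omega)
            have h2 := List.take_prefix t (factorAt W (g L) L)
            rw [h1] at h2
            exact hin.trans h2.isInfix
          have hnrs : ¬ RightSp W (factorAt W (g L) t) :=
            hCLM _ (isFactor_factorAt W (g L) t) (by rw [length_factorAt]; exact ht) havt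
          have hkey : W (i + t) = W (g L + t) := by
            apply eq_of_not_rs W hnrs
            · rw [← hEq, ← factorAt_succ]
              exact isFactor_factorAt W i (t + 1)
            · rw [← factorAt_succ]
              exact isFactor_factorAt W (g L) (t + 1)
          rw [factorAt_succ, factorAt_succ, hEq, hkey]
    refine hperiod_of_eq i₁ i₂ M hlt ?_
    intro t ht
    obtain ⟨L, hLmem, hLgt⟩ := hw₀.exists_gt t
    rw [hchain i₁ ho₁ t ht L hLmem.1 hLmem.2 (le_of_lt hLgt),
      hchain i₂ ho₂ t ht L hLmem.1 hLmem.2 (le_of_lt hLgt)]
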